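/- Let π = (d_1, d_2, …, d_k, 1, …, 1) be the degree sequence of a tree with d_1 ≥ d_2 ≥ … ≥ d_k ≥ 2 and k ≥ 3. If C(z_1, z_2, …, z_k) is a caterpillar that maximizes φ over 𝒞_π, then there exists an integer t with 1 ≤ t ≤ k−1 such that z_1 ≤ z_2 ≤ … ≤ z_{t−1} < z_t and z_t ≥ z_{t+1} ≥ … ≥ z_k (the condition z_{t−1} < z_t being vacuous when t = 1). -/

import Mathlib

open SimpleGraph

/-- Vertex type of the caterpillar `C(y₁,…,y_k)`: the spine `v₀ v₁ ⋯ v_{k+1}`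
(indexed by `Fin (k+2)`) together with, for each `i : Fin k`, the `y i` pendant
leaves attached at the spine vertex `v_{i+1}`. -/
abbrev CatV (k : ℕ) (y : Fin k → ℕ) : Type :=
  Fin (k + 2) ⊕ (Σ i : Fin k, Fin (y i))

/-- The caterpillar `C(y₁,…,y_k)`, obtained from the path `v₀ v₁ ⋯ v_k v_{k+1}`
by attaching `y i` pendant leaves at the spine vertex `v_{i+1}` for each `i : Fin k`
(so, in 1-based terms, `y_j` leaves at `v_j` for `j = 1,…,k`). -/
def catGraph (k : ℕ) (y : Fin k → ℕ) : SimpleGraph (CatV k y) :=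
  SimpleGraph.fromRel fun a b =>
    match a, b with
    | Sum.inl i, Sum.inl j => (i : ℕ) + 1 = (j : ℕ)
    | Sum.inl i, Sum.inr x => (i : ℕ) = (x.1 : ℕ) + 1
    | Sum.inr _, _ => False

/-- `φ(G)`: the number of subtrees of `G`, i.e. nonempty vertex subsets whose
induced subgraph is connected. -/
noncomputable def numSubtrees {V : Type*} [Fintype V] (G : SimpleGraph V) : ℕ :=
  Nat.card {s : Finset V // s.Nonempty ∧ (G.induce (↑s : Set V)).Connected}

/-- The number of subtrees of the subgraph of `G` induced on `S` that contain
the vertex `v`. -/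
noncomputable def fIn {V : Type*} [Fintype V] (G : SimpleGraph V) (S : Set V) (v : V) : ℕ :=
  Nat.card {s : Finset V // v ∈ s ∧ (↑s : Set V) ⊆ S ∧ (G.induce (↑s : Set V)).Connected}

/-- The multiset of vertex degrees of `G` (the degree sequence, up to ordering). -/
noncomputable def degreeMS {V : Type*} [Fintype V] (G : SimpleGraph V) : Multiset ℕ :=
  Finset.univ.val.map fun v => Nat.card (G.neighborSet v)

/-- A caterpillar: a tree having a path such that every vertex not on the path
is adjacent to a vertex on the path. -/
def IsCaterpillar {V : Type*} (G : SimpleGraph V) : Prop :=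
  G.IsTree ∧ ∃ (u v : V) (p : G.Walk u v), p.IsPath ∧
    ∀ w, w ∉ p.support → ∃ x ∈ p.support, G.Adj w x

/-- The spine vertex `v_j` of the caterpillar `C(y₁,…,y_k)` (for `j ≤ k+1`). -/
def spine (k : ℕ) (y : Fin k → ℕ) (j : ℕ) : CatV k y :=
  Sum.inl ⟨j % (k + 2), Nat.mod_lt _ (by omega)⟩

/-- `V_j`: the vertex set of the connected component containing `v_j` after
deleting the edges `v_{j-1}v_j` and `v_j v_{j+1}`, i.e. `v_j` together with
its pendant leaves. -/
def Vcomp (k : ℕ) (y : Fin k → ℕ) (j : ℕ) : Set (CatV k y) :=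
  {x | Sum.elim (fun i : Fin (k + 2) => (i : ℕ) = j)
      (fun p : Σ i : Fin k, Fin (y i) => (p.1 : ℕ) + 1 = j) x}

/-- `V_{≤j}`: the component containing `v_j` after deleting the edge `v_j v_{j+1}`. -/
def Vle (k : ℕ) (y : Fin k → ℕ) (j : ℕ) : Set (CatV k y) :=
  {x | Sum.elim (fun i : Fin (k + 2) => (i : ℕ) ≤ j)
      (fun p : Σ i : Fin k, Fin (y i) => (p.1 : ℕ) + 1 ≤ j) x}

/-- `V_{≥j}`: the component containing `v_j` after deleting the edge `v_{j-1}v_j`. -/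
def Vge (k : ℕ) (y : Fin k → ℕ) (j : ℕ) : Set (CatV k y) :=
  {x | Sum.elim (fun i : Fin (k + 2) => j ≤ (i : ℕ))
      (fun p : Σ i : Fin k, Fin (y i) => j ≤ (p.1 : ℕ) + 1) x}

/-- `f_{V_j}(v_j)` in the caterpillar `C(y₁,…,y_k)`. -/
noncomputable def fV (k : ℕ) (y : Fin k → ℕ) (j : ℕ) : ℕ :=
  fIn (catGraph k y) (Vcomp k y j) (spine k y j)

/-- `f_{V_{≤j}}(v_j)` in the caterpillar `C(y₁,…,y_k)`. -/
noncomputable def fVle (k : ℕ) (y : Fin k → ℕ) (j : ℕ) : ℕ :=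
  fIn (catGraph k y) (Vle k y j) (spine k y j)

/-- `f_{V_{≥j}}(v_j)` in the caterpillar `C(y₁,…,y_k)`. -/
noncomputable def fVge (k : ℕ) (y : Fin k → ℕ) (j : ℕ) : ℕ :=
  fIn (catGraph k y) (Vge k y j) (spine k y j)

/-- `y` is a permutation of `d`. -/
def IsPermOf (k : ℕ) (y d : Fin k → ℕ) : Prop :=
  ∃ σ : Equiv.Perm (Fin k), ∀ i, y i = d (σ i)

/-- The degree sequence `π = (d₁,…,d_k,1,…,1)` with `n` entries, as a multiset. -/
def degSeq (k : ℕ) (d : Fin k → ℕ) (n : ℕ) : Multiset ℕ :=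
  Finset.univ.val.map d + Multiset.replicate (n - k) 1

-- ===== auxiliary development =====
namespace Cat
variable {k : ℕ} {y : Fin k → ℕ}

def co : CatV k y → ℕ := Sum.elim (fun i => (i:ℕ)) (fun p => (p.1:ℕ)+1)

@[simp] lemma co_inl (i : Fin (k+2)) : co (Sum.inl i : CatV k y) = (i:ℕ) := rfl
@[simp] lemma co_inr (x : Σ i : Fin k, Fin (y i)) : co (Sum.inr x : CatV k y) = (x.1:ℕ)+1 := rfl

lemma adj_inl_inl {i j : Fin (k+2)} :
    (catGraph k y).Adj (Sum.inl i) (Sum.inl j) ↔ ((i:ℕ)+1 = j ∨ (j:ℕ)+1 = i) := by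
  rw [catGraph, fromRel_adj]
  constructor
  · rintro ⟨-, h | h⟩
    · exact Or.inl h
    · exact Or.inr h
  · rintro (h | h)
    · exact ⟨by simp [Fin.ext_iff]; omega, Or.inl h⟩
    · exact ⟨by simp [Fin.ext_iff]; omega, Or.inr h⟩

lemma adj_inl_inr {i : Fin (k+2)} {x : Σ i : Fin k, Fin (y i)} :
    (catGraph k y).Adj (Sum.inl i) (Sum.inr x) ↔ (i:ℕ) = (x.1:ℕ)+1 := by
  rw [catGraph, fromRel_adj]
  constructor
  · rintro ⟨-, h | h⟩
    · exact h
    · exact h.elim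
  · intro h
    exact ⟨by simp, Or.inl h⟩

lemma adj_inr_inl {i : Fin (k+2)} {x : Σ i : Fin k, Fin (y i)} :
    (catGraph k y).Adj (Sum.inr x) (Sum.inl i) ↔ (i:ℕ) = (x.1:ℕ)+1 := by
  rw [adj_comm, adj_inl_inr]

@[simp] lemma adj_inr_inr {x x' : Σ i : Fin k, Fin (y i)} :
    ¬ (catGraph k y).Adj (Sum.inr x) (Sum.inr x') := by
  rw [catGraph, fromRel_adj]
  rintro ⟨-, h | h⟩ <;> exact h

lemma adj_co {a b : CatV k y} (h : (catGraph k y).Adj a b) :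
    co b ≤ co a + 1 ∧ co a ≤ co b + 1 := by
  cases a with
  | inl i =>
    cases b with
    | inl j => rcases adj_inl_inl.1 h with h' | h' <;> simp <;> omega
    | inr x => have := adj_inl_inr.1 h; simp; omega
  | inr x =>
    cases b with
    | inl j => have := adj_inr_inl.1 h; simp; omega
    | inr x' => exact absurd h adj_inr_inr

lemma leaf_nbr {x : Σ i : Fin k, Fin (y i)} {c : CatV k y}
    (h : (catGraph k y).Adj (Sum.inr x) c) :
    c = Sum.inl ⟨(x.1:ℕ)+1, by omega⟩ := by
  cases c with
  | inl i =>
    have := adj_inr_inl.1 h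
    congr 1
    exact Fin.ext this
  | inr x' => exact absurd h adj_inr_inr

lemma co_lt (a : CatV k y) : co a ≤ k+1 := by
  cases a with
  | inl i => have := i.2; simp; omega
  | inr x => simp

-- NEW PART
lemma cross_edge {u v : CatV k y} (p : (catGraph k y).Walk u v) (ja jb : Fin (k+2))
    (hjj : (ja:ℕ)+1 = (jb:ℕ)) (hu : co u ≤ (ja:ℕ)) (hv : (jb:ℕ) ≤ co v) :
    s((Sum.inl ja : CatV k y), (Sum.inl jb : CatV k y)) ∈ p.edges := by
  induction p with
  | nil => simp at hu hv ⊢; omega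
  | @cons a b c h q ih =>
    by_cases hb : co b ≤ (ja:ℕ)
    · rw [Walk.edges_cons]
      exact List.mem_cons_of_mem _ (ih hb hv)
    · push_neg at hb
      have hco := adj_co h
      have haj : co a = (ja:ℕ) := by omega
      have hbj : co b = (ja:ℕ) + 1 := by omega
      have ha' : a = (Sum.inl ja : CatV k y) := by
        cases a with
        | inl i => simp at haj; exact congrArg Sum.inl (Fin.ext haj)
        | inr x =>
          exfalso
          have hb2 := leaf_nbr h
          rw [hb2] at hbj
          simp at haj hbj
          omega
      have hb' : b = (Sum.inl jb : CatV k y) := by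
        cases b with
        | inl i => simp at hbj; exact congrArg Sum.inl (Fin.ext (by omega))
        | inr x =>
          exfalso
          have h2 := leaf_nbr (h.symm)
          rw [ha'] at h2
          simp [Sum.inl.injEq, Fin.ext_iff] at h2
          simp at hbj
          omega
      subst ha'
      subst hb'
      rw [Walk.edges_cons]
      exact List.mem_cons_self

lemma leaf_edge {x : Σ i : Fin k, Fin (y i)} {v : CatV k y}
    (q : (catGraph k y).Walk (Sum.inr x) v) (hv : v ≠ Sum.inr x) :
    s((Sum.inr x : CatV k y), (Sum.inl ⟨(x.1:ℕ)+1, by omega⟩ : CatV k y)) ∈ q.edges := by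
  cases q with
  | nil => exact absurd rfl hv
  | @cons a b c h q' =>
    have hb := leaf_nbr h
    subst hb
    rw [Walk.edges_cons]
    exact List.mem_cons_self

lemma acyclic : (catGraph k y).IsAcyclic := by
  rw [isAcyclic_iff_forall_adj_isBridge]
  intro v w hvw
  rw [isBridge_iff_adj_and_forall_walk_mem_edges]
  refine fun p => ?_
  cases v with
  | inl i =>
    cases w with
    | inl i' =>
      rcases adj_inl_inl.1 hvw with hc | hc
      · exact cross_edge p i i' hc (by simp) (by simp)
      · have key := cross_edge p.reverse i' i hc (by simp) (by simp)
        rw [Walk.edges_reverse, List.mem_reverse] at key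
        rw [Sym2.eq_swap]
        exact key
    | inr x =>
      have hc := adj_inl_inr.1 hvw
      have key := leaf_edge p.reverse (by simp)
      rw [Walk.edges_reverse, List.mem_reverse] at key
      have he : (Sum.inl i : CatV k y) = Sum.inl ⟨(x.1:ℕ)+1, by omega⟩ :=
        congrArg Sum.inl (Fin.ext (by simpa using hc))
      have he2 : s((Sum.inr x : CatV k y), Sum.inl i)
          = s((Sum.inr x : CatV k y), Sum.inl ⟨(x.1:ℕ)+1, by omega⟩) := by rw [he]
      rw [Sym2.eq_swap, he2]
      exact key
  | inr x =>
    have hw := leaf_nbr hvw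
    subst hw
    exact leaf_edge p (by simp)

lemma reach_spine : ∀ (j : ℕ) (h : j < k+2),
    (catGraph k y).Reachable (Sum.inl ⟨0, by omega⟩) (Sum.inl ⟨j, h⟩)
  | 0, _ => Reachable.refl _
  | j+1, h => (reach_spine j (by omega)).trans
      (Adj.reachable (adj_inl_inl.2 (Or.inl rfl)))

lemma reach_all (a : CatV k y) :
    (catGraph k y).Reachable (Sum.inl ⟨0, by omega⟩) a := by
  cases a with
  | inl i =>
    have h1 := reach_spine (k := k) (y := y) (i:ℕ) i.2
    have : (⟨(i:ℕ), i.2⟩ : Fin (k+2)) = i := Fin.ext rfl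
    rwa [this] at h1
  | inr x =>
    have h1 := reach_spine (k := k) (y := y) ((x.1:ℕ)+1) (by omega)
    exact h1.trans (Adj.reachable (adj_inl_inr.2 (by simp)))

lemma connected : (catGraph k y).Connected :=
  Connected.mk fun a b => (reach_all a).symm.trans (reach_all b)

lemma isTree : (catGraph k y).IsTree := ⟨connected, acyclic⟩

/-- spine segment walk from `v_j` to `v_{j+m}` -/
def wseg : (m : ℕ) → (j : ℕ) → (h : j + m ≤ k+1) →
    (catGraph k y).Walk (Sum.inl ⟨j, by omega⟩) (Sum.inl ⟨j+m, by omega⟩)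
  | 0, j, _ => Walk.nil
  | m+1, j, h =>
    (Walk.cons (adj_inl_inl.2 (Or.inl rfl)) (wseg m (j+1) (by omega))).copy rfl
      (congrArg Sum.inl (Fin.mk_eq_mk.mpr (by omega)))

lemma wseg_support (m : ℕ) : ∀ (j : ℕ) (h : j + m ≤ k+1) (a : CatV k y),
    a ∈ (wseg m j h).support ↔ ∃ i : Fin (k+2), a = Sum.inl i ∧ j ≤ (i:ℕ) ∧ (i:ℕ) ≤ j + m := by
  induction m with
  | zero =>
    intro j h a
    simp only [wseg, Walk.support_nil, List.mem_singleton]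
    constructor
    · rintro rfl; exact ⟨⟨j, by omega⟩, rfl, by simp, by simp⟩
    · rintro ⟨i, rfl, h1, h2⟩
      exact congrArg Sum.inl (Fin.ext (by simpa using by omega))
  | succ m ih =>
    intro j h a
    simp only [wseg, Walk.support_copy, Walk.support_cons, List.mem_cons]
    rw [ih (j+1) (by omega) a]
    constructor
    · rintro (rfl | ⟨i, rfl, h1, h2⟩)
      · exact ⟨⟨j, by omega⟩, rfl, by simp, by simp⟩
      · exact ⟨i, rfl, by omega, by omega⟩
    · rintro ⟨i, rfl, h1, h2⟩
      by_cases hij : (i:ℕ) = j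
      · exact Or.inl (congrArg Sum.inl (Fin.ext (by simpa using hij)))
      · exact Or.inr ⟨i, rfl, by omega, by omega⟩

lemma wseg_isPath (m : ℕ) : ∀ (j : ℕ) (h : j + m ≤ k+1), (wseg (k:=k) (y:=y) m j h).IsPath := by
  induction m with
  | zero => intro j h; simp [wseg]
  | succ m ih =>
    intro j h
    simp only [wseg, Walk.isPath_copy]
    rw [Walk.cons_isPath_iff]
    refine ⟨ih (j+1) (by omega), ?_⟩
    rw [wseg_support]
    rintro ⟨i, hi, h1, h2⟩
    have : (i:ℕ) = j := by
      have := congrArg co hi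
      simpa using this.symm
    omega

lemma isCat : IsCaterpillar (catGraph k y) := by
  refine ⟨isTree, Sum.inl ⟨0, by omega⟩, Sum.inl ⟨0 + (k+1), by omega⟩,
    wseg (k+1) 0 (by omega), wseg_isPath _ _ _, ?_⟩
  intro w hw
  cases w with
  | inl i =>
    exfalso
    apply hw
    rw [wseg_support]
    exact ⟨i, rfl, by omega, by have := i.2; omega⟩
  | inr x =>
    refine ⟨Sum.inl ⟨(x.1:ℕ)+1, by omega⟩, ?_, adj_inr_inl.2 rfl⟩
    rw [wseg_support]
    refine ⟨⟨(x.1:ℕ)+1, by omega⟩, rfl, by simp, by simp⟩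


def Good (s : Finset (CatV k y)) : Prop :=
  (∃ x : Σ i : Fin k, Fin (y i), s = {Sum.inr x}) ∨
  (∃ a b : ℕ, a ≤ b ∧ b ≤ k+1 ∧
    (∀ i : Fin (k+2), Sum.inl i ∈ s ↔ (a ≤ (i:ℕ) ∧ (i:ℕ) ≤ b)) ∧
    (∀ x : Σ i : Fin k, Fin (y i), Sum.inr x ∈ s → a ≤ (x.1:ℕ)+1 ∧ (x.1:ℕ)+1 ≤ b))

lemma ind_adj {S : Set (CatV k y)} {u v : ↑S} :
    ((catGraph k y).induce S).Adj u v ↔ (catGraph k y).Adj u.val v.val := by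
  simp [SimpleGraph.induce]

lemma walk_mid {s : Finset (CatV k y)} {u v : ↑(↑s : Set (CatV k y))}
    (p : ((catGraph k y).induce (↑s : Set (CatV k y))).Walk u v) (c : ℕ)
    (hc : (co u.val ≤ c ∧ c ≤ co v.val) ∨ (co v.val ≤ c ∧ c ≤ co u.val)) :
    (∃ i : Fin (k+2), (i:ℕ) = c ∧ Sum.inl i ∈ s) ∨
    (co u.val = c ∧ ∃ x, u.val = Sum.inr x) ∨ (co v.val = c ∧ ∃ x, v.val = Sum.inr x) := by
  induction p with
  | @nil u =>
    have hcu : co u.val = c := by omega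
    cases hu : u.val with
    | inl i =>
      left
      refine ⟨i, ?_, ?_⟩
      · rw [hu] at hcu; simpa using hcu
      · rw [← hu]; exact Finset.mem_coe.1 u.2
    | inr x => right; left; rw [hu] at hcu; exact ⟨hcu, x, rfl⟩
  | @cons u b v h q ih =>
    have hadj : (catGraph k y).Adj u.val b.val := ind_adj.1 h
    by_cases hmid : (co b.val ≤ c ∧ c ≤ co v.val) ∨ (co v.val ≤ c ∧ c ≤ co b.val)
    · rcases ih hmid with h1 | ⟨hcb, x, hbx⟩ | h3
      · left; exact h1
      · rw [hbx] at hadj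
        have hun := leaf_nbr (hadj.symm)
        left
        refine ⟨⟨(x.1:ℕ)+1, by omega⟩, ?_, ?_⟩
        · rw [hbx] at hcb; simpa using hcb
        · rw [← hun]; exact Finset.mem_coe.1 u.2
      · right; right; exact h3
    · have hco := adj_co hadj
      have hcu : co u.val = c := by omega
      cases hu : u.val with
      | inl i =>
        left
        refine ⟨i, ?_, ?_⟩
        · rw [hu] at hcu; simpa using hcu
        · rw [← hu]; exact Finset.mem_coe.1 u.2
      | inr x => right; left; rw [hu] at hcu; exact ⟨hcu, x, rfl⟩

lemma no_inl_walk {s : Finset (CatV k y)} (hno : ∀ i : Fin (k+2), Sum.inl i ∉ s)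
    {u v : ↑(↑s : Set (CatV k y))}
    (p : ((catGraph k y).induce (↑s : Set (CatV k y))).Walk u v) : u = v := by
  induction p with
  | nil => rfl
  | @cons u b v h q ih =>
    exfalso
    have hadj : (catGraph k y).Adj u.val b.val := ind_adj.1 h
    have hu := Finset.mem_coe.1 u.2
    have hb := Finset.mem_coe.1 b.2
    cases hu' : u.val with
    | inl i => exact hno i (hu' ▸ hu)
    | inr x =>
      cases hb' : b.val with
      | inl i => exact hno i (hb' ▸ hb)
      | inr x' =>
        rw [hu', hb'] at hadj
        exact adj_inr_inr hadj

lemma leaf_step {s : Finset (CatV k y)} {x : Σ i : Fin k, Fin (y i)}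
    {u v : ↑(↑s : Set (CatV k y))}
    (p : ((catGraph k y).induce (↑s : Set (CatV k y))).Walk u v)
    (hx : u.val = Sum.inr x) (hv : v.val ≠ u.val) :
    Sum.inl (⟨(x.1:ℕ)+1, by omega⟩ : Fin (k+2)) ∈ s := by
  cases p with
  | nil => exact absurd rfl hv
  | @cons _ b _ h q =>
    have hadj : (catGraph k y).Adj u.val b.val := ind_adj.1 h
    rw [hx] at hadj
    have hb := leaf_nbr hadj
    rw [← hb]
    exact Finset.mem_coe.1 b.2

lemma good_iff (s : Finset (CatV k y)) :
    (s.Nonempty ∧ ((catGraph k y).induce (↑s : Set (CatV k y))).Connected) ↔ Good s := by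
  classical
  constructor
  · rintro ⟨hne, hconn⟩
    by_cases hinl : ∃ i : Fin (k+2), Sum.inl i ∈ s
    · right
      obtain ⟨i0, hi0⟩ := hinl
      set T : Finset (Fin (k+2)) := Finset.univ.filter (fun i => Sum.inl i ∈ s) with hT
      have hTne : T.Nonempty := ⟨i0, by simp [hT, hi0]⟩
      set A := T.min' hTne with hA
      set B := T.max' hTne with hB
      have hmemT : ∀ i : Fin (k+2), i ∈ T ↔ Sum.inl i ∈ s := by intro i; simp [hT]
      have hAs : Sum.inl A ∈ s := (hmemT A).1 (T.min'_mem hTne)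
      have hBs : Sum.inl B ∈ s := (hmemT B).1 (T.max'_mem hTne)
      have hbd : ∀ i : Fin (k+2), Sum.inl i ∈ s → A ≤ i ∧ i ≤ B :=
        fun i hi => ⟨T.min'_le i ((hmemT i).2 hi), T.le_max' i ((hmemT i).2 hi)⟩
      refine ⟨(A:ℕ), (B:ℕ), ?_, ?_, ?_, ?_⟩
      · exact (hbd A hAs).2
      · exact Nat.lt_succ_iff.1 B.2
      · intro i
        constructor
        · intro hi
          exact ⟨(hbd i hi).1, (hbd i hi).2⟩
        · rintro ⟨h1, h2⟩
          obtain ⟨p⟩ := hconn ⟨Sum.inl A, Finset.mem_coe.2 hAs⟩ ⟨Sum.inl B, Finset.mem_coe.2 hBs⟩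
          rcases walk_mid p (i:ℕ) (Or.inl ⟨by simpa using h1, by simpa using h2⟩) with
            ⟨j, hj, hjs⟩ | ⟨-, x, hx⟩ | ⟨-, x, hx⟩
          · rwa [show i = j from Fin.ext hj.symm]
          · simp at hx
          · simp at hx
      · intro x hx
        obtain ⟨p⟩ := hconn ⟨Sum.inr x, Finset.mem_coe.2 hx⟩ ⟨Sum.inl A, Finset.mem_coe.2 hAs⟩
        have hstep := leaf_step p rfl (by simp)
        have := hbd _ hstep
        exact ⟨by have h := this.1; rw [Fin.le_def] at h; simp at h; omega, by have h := this.2; rw [Fin.le_def] at h; simp at h; omega⟩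
    · left
      obtain ⟨a, ha⟩ := hne
      cases ha' : a with
      | inl i => exact absurd (ha' ▸ ha) (fun h => hinl ⟨i, h⟩)
      | inr x =>
        refine ⟨x, Finset.eq_singleton_iff_unique_mem.2 ⟨ha' ▸ ha, ?_⟩⟩
        intro b hb
        obtain ⟨p⟩ := hconn ⟨b, Finset.mem_coe.2 hb⟩ ⟨a, Finset.mem_coe.2 ha⟩
        have := no_inl_walk (fun i hi => hinl ⟨i, hi⟩) p
        have hba : b = a := congrArg Subtype.val this
        rw [hba, ha']
  · rintro (⟨x, rfl⟩ | ⟨a, b, hab, hb, hsp, hlf⟩)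
    · refine ⟨⟨Sum.inr x, by simp⟩, ?_⟩
      have hne : Nonempty ↑((↑({Sum.inr x} : Finset (CatV k y))) : Set (CatV k y)) :=
        ⟨⟨Sum.inr x, by simp⟩⟩
      refine Connected.mk ?_
      intro u v
      have : u = v := by
        apply Subtype.ext
        have hu := Finset.mem_singleton.1 (Finset.mem_coe.1 u.2)
        have hv := Finset.mem_singleton.1 (Finset.mem_coe.1 v.2)
        rw [hu, hv]
      exact this ▸ Reachable.refl _
    · have hmem : ∀ c (hck : c < k+2) (h1 : a ≤ c) (h2 : c ≤ b),
          Sum.inl (⟨c, hck⟩ : Fin (k+2)) ∈ s :=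
        fun c hck h1 h2 => (hsp _).2 ⟨by simpa using h1, by simpa using h2⟩
      have hane : Sum.inl (⟨a, by omega⟩ : Fin (k+2)) ∈ s := hmem a (by omega) le_rfl hab
      refine ⟨⟨_, hane⟩, ?_⟩
      have hne : Nonempty ↑((↑s : Set (CatV k y))) := ⟨⟨_, Finset.mem_coe.2 hane⟩⟩
      have climb : ∀ m (h : a + m ≤ b),
          ((catGraph k y).induce (↑s : Set (CatV k y))).Reachable
            ⟨Sum.inl ⟨a, by omega⟩, Finset.mem_coe.2 hane⟩
            ⟨Sum.inl ⟨a + m, by omega⟩, Finset.mem_coe.2 (hmem (a+m) (by omega) (by omega) h)⟩ := by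
        intro m
        induction m with
        | zero => intro h; exact Reachable.refl _
        | succ m ih =>
          intro h
          refine (ih (by omega)).trans (Adj.reachable ?_)
          exact ind_adj.2 (adj_inl_inl.2 (Or.inl rfl))
      have reach : ∀ u : ↑(↑s : Set (CatV k y)),
          ((catGraph k y).induce (↑s : Set (CatV k y))).Reachable
            ⟨Sum.inl ⟨a, by omega⟩, Finset.mem_coe.2 hane⟩ u := by
        intro u
        cases huv : u.val with
        | inl i =>
          have hbd := (hsp i).1 (by rw [← huv]; exact Finset.mem_coe.1 u.2)
          have h1 := climb ((i:ℕ) - a) (by omega)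
          have he : (⟨Sum.inl ⟨a + ((i:ℕ) - a), by omega⟩,
              Finset.mem_coe.2 (hmem _ (by omega) (by omega) (by omega))⟩ :
              ↑(↑s : Set (CatV k y))) = u := by
            apply Subtype.ext
            rw [huv]
            exact congrArg Sum.inl (Fin.ext (by simp; omega))
          rwa [he] at h1
        | inr x =>
          have hbd := hlf x (by rw [← huv]; exact Finset.mem_coe.1 u.2)
          have h1 := climb ((x.1:ℕ) + 1 - a) (by omega)
          refine h1.trans (Adj.reachable ?_)
          apply ind_adj.2
          show (catGraph k y).Adj _ u.val
          rw [huv]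
          exact adj_inl_inr.2 (by simp; omega)
      refine Connected.mk ?_
      intro u v
      exact (reach u).symm.trans (reach v)


open scoped Classical
variable {k : ℕ} {y : Fin k → ℕ}

def pairs (k : ℕ) : Finset (ℕ × ℕ) :=
  ((Finset.range (k+2)) ×ˢ (Finset.range (k+2))).filter (fun p => p.1 ≤ p.2)

def Ex (y : Fin k → ℕ) (p : ℕ × ℕ) : ℕ :=
  ∑ i ∈ Finset.univ.filter (fun i : Fin k => p.1 ≤ (i:ℕ)+1 ∧ (i:ℕ)+1 ≤ p.2), y i

def Phi (k : ℕ) (y : Fin k → ℕ) : ℕ := (∑ i, y i) + ∑ p ∈ pairs k, 2^(Ex y p)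

def GoodAt (p : ℕ × ℕ) (s : Finset (CatV k y)) : Prop :=
  (∀ i : Fin (k+2), Sum.inl i ∈ s ↔ (p.1 ≤ (i:ℕ) ∧ (i:ℕ) ≤ p.2)) ∧
  (∀ x : Σ i : Fin k, Fin (y i), Sum.inr x ∈ s → p.1 ≤ (x.1:ℕ)+1 ∧ (x.1:ℕ)+1 ≤ p.2)

lemma mem_pairs {p : ℕ × ℕ} : p ∈ pairs k ↔ p.1 ≤ p.2 ∧ p.2 ≤ k+1 := by
  cases p with
  | mk a b =>
    simp only [pairs, Finset.mem_filter, Finset.mem_product, Finset.mem_range]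
    omega

def spineF (a b : ℕ) : Finset (CatV k y) :=
  (Finset.univ.filter (fun i : Fin (k+2) => a ≤ (i:ℕ) ∧ (i:ℕ) ≤ b)).image Sum.inl

def allowed (y : Fin k → ℕ) (a b : ℕ) : Finset (Σ i : Fin k, Fin (y i)) :=
  Finset.univ.filter (fun x => a ≤ (x.1:ℕ)+1 ∧ (x.1:ℕ)+1 ≤ b)

lemma inl_mem_spineF {a b : ℕ} {i : Fin (k+2)} :
    (Sum.inl i : CatV k y) ∈ (spineF a b : Finset (CatV k y)) ↔ a ≤ (i:ℕ) ∧ (i:ℕ) ≤ b := by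
  simp [spineF]

lemma inr_not_mem_spineF {a b : ℕ} {x : Σ i : Fin k, Fin (y i)} :
    (Sum.inr x : CatV k y) ∉ (spineF a b : Finset (CatV k y)) := by
  simp [spineF]

lemma goodAt_iff {a b : ℕ} (s : Finset (CatV k y)) :
    GoodAt (a, b) s ↔ ∃ T ∈ (allowed y a b).powerset, s = spineF a b ∪ T.image Sum.inr := by
  constructor
  · rintro ⟨hsp, hlf⟩
    refine ⟨Finset.univ.filter (fun x => Sum.inr x ∈ s), ?_, ?_⟩
    · rw [Finset.mem_powerset]
      intro x hx
      simp only [Finset.mem_filter, Finset.mem_univ, true_and] at hx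
      simp only [allowed, Finset.mem_filter, Finset.mem_univ, true_and]
      exact hlf x hx
    · ext c
      cases c with
      | inl i =>
        rw [Finset.mem_union, inl_mem_spineF]
        simp only [Finset.mem_image, reduceCtorEq, and_false, exists_false, or_false]
        constructor
        · intro h; exact (hsp i).1 h
        · intro h; exact (hsp i).2 h
      | inr x =>
        rw [Finset.mem_union]
        simp only [inr_not_mem_spineF, false_or, Finset.mem_image]
        constructor
        · intro h; exact ⟨x, by simp [h], rfl⟩
        · rintro ⟨x', hx', he⟩
          have : x' = x := by injection he
          subst this
          simpa using hx'
  · rintro ⟨T, hT, rfl⟩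
    rw [Finset.mem_powerset] at hT
    constructor
    · intro i
      rw [Finset.mem_union, inl_mem_spineF]
      constructor
      · rintro (h | h)
        · exact h
        · exfalso; simp at h
      · intro h; exact Or.inl h
    · intro x hx
      rw [Finset.mem_union] at hx
      rcases hx with hx | hx
      · exact absurd hx inr_not_mem_spineF
      · simp only [Finset.mem_image] at hx
        obtain ⟨x', hx', he⟩ := hx
        have : x' = x := by injection he
        subst this
        have := hT hx'
        simp only [allowed, Finset.mem_filter, Finset.mem_univ, true_and] at this
        exact this

lemma goodAt_unique {p q : ℕ × ℕ} (hp : p ∈ pairs k) (hq : q ∈ pairs k)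
    {s : Finset (CatV k y)} (h1 : GoodAt p s) (h2 : GoodAt q s) : p = q := by
  obtain ⟨a, b⟩ := p
  obtain ⟨a', b'⟩ := q
  rw [mem_pairs] at hp hq
  simp only at hp hq
  have ha : Sum.inl (⟨a, by omega⟩ : Fin (k+2)) ∈ s := (h1.1 _).2 (by simp; omega)
  have hb : Sum.inl (⟨b, by omega⟩ : Fin (k+2)) ∈ s := (h1.1 _).2 (by simp; omega)
  have ha' : Sum.inl (⟨a', by omega⟩ : Fin (k+2)) ∈ s := (h2.1 _).2 (by simp; omega)
  have hb' : Sum.inl (⟨b', by omega⟩ : Fin (k+2)) ∈ s := (h2.1 _).2 (by simp; omega)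
  have c1 := (h2.1 _).1 ha
  have c2 := (h2.1 _).1 hb
  have c3 := (h1.1 _).1 ha'
  have c4 := (h1.1 _).1 hb'
  simp at c1 c2 c3 c4
  have : a = a' ∧ b = b' := by omega
  rw [this.1, this.2]

lemma card_allowed (a b : ℕ) : (allowed y a b).card = Ex y (a, b) := by
  rw [allowed, Finset.card_filter, Ex]
  rw [← Finset.univ_sigma_univ, Finset.sum_sigma]
  rw [Finset.sum_filter]
  congr 1
  ext i
  by_cases h : a ≤ (i:ℕ)+1 ∧ (i:ℕ)+1 ≤ b <;> simp [h]

lemma card_goodAt (a b : ℕ) :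
    (Finset.univ.filter (fun s : Finset (CatV k y) => GoodAt (a, b) s)).card = 2^(Ex y (a, b)) := by
  have himg : Finset.univ.filter (fun s : Finset (CatV k y) => GoodAt (a, b) s) =
      (allowed y a b).powerset.image (fun T => spineF a b ∪ T.image Sum.inr) := by
    ext s
    simp only [Finset.mem_filter, Finset.mem_univ, true_and, Finset.mem_image]
    rw [goodAt_iff]
    constructor
    · rintro ⟨T, hT, rfl⟩; exact ⟨T, hT, rfl⟩
    · rintro ⟨T, hT, rfl⟩; exact ⟨T, hT, rfl⟩
  rw [himg, Finset.card_image_of_injOn, Finset.card_powerset, card_allowed]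
  intro T hT T' hT' he
  ext x
  have hx := congrArg (fun u => (Sum.inr x : CatV k y) ∈ u) he
  simp only [Finset.mem_union, eq_iff_iff] at hx
  simp only [inr_not_mem_spineF, false_or, Finset.mem_image] at hx
  constructor
  · intro h
    rcases hx.1 ⟨x, h, rfl⟩ with ⟨x', hx', hxe⟩
    have : x' = x := by injection hxe
    exact this ▸ hx'
  · intro h
    rcases hx.2 ⟨x, h, rfl⟩ with ⟨x', hx', hxe⟩
    have : x' = x := by injection hxe
    exact this ▸ hx'

lemma good_iff_strong (s : Finset (CatV k y)) :
    Good s ↔ (∃ x : Σ i : Fin k, Fin (y i), s = {Sum.inr x}) ∨ ∃ p ∈ pairs k, GoodAt p s := by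
  unfold Good
  constructor
  · rintro (h | ⟨a, b, hab, hb, hsp, hlf⟩)
    · exact Or.inl h
    · exact Or.inr ⟨(a, b), mem_pairs.2 ⟨hab, hb⟩, hsp, hlf⟩
  · rintro (h | ⟨⟨a, b⟩, hp, hsp, hlf⟩)
    · exact Or.inl h
    · rw [mem_pairs] at hp
      exact Or.inr ⟨a, b, hp.1, hp.2, hsp, hlf⟩

theorem numSubtrees_eq : numSubtrees (catGraph k y) = Phi k y := by
  have h1 : numSubtrees (catGraph k y) =
      (Finset.univ.filter (fun s : Finset (CatV k y) =>
        s.Nonempty ∧ ((catGraph k y).induce (↑s : Set (CatV k y))).Connected)).card := by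
    rw [numSubtrees, Nat.card_eq_fintype_card, Fintype.card_subtype]
  rw [h1]
  have h2 : Finset.univ.filter (fun s : Finset (CatV k y) =>
        s.Nonempty ∧ ((catGraph k y).induce (↑s : Set (CatV k y))).Connected) =
      Finset.univ.filter (fun s => (∃ x : Σ i : Fin k, Fin (y i), s = {Sum.inr x}) ∨
        ∃ p ∈ pairs k, GoodAt p s) := by
    apply Finset.filter_congr
    intro s _
    rw [good_iff s, good_iff_strong s]
  rw [h2, Finset.filter_or, Finset.card_union_of_disjoint]
  · congr 1
    · -- singletons
      have : Finset.univ.filter (fun s : Finset (CatV k y) =>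
          ∃ x : Σ i : Fin k, Fin (y i), s = {Sum.inr x}) =
          (Finset.univ : Finset (Σ i : Fin k, Fin (y i))).image (fun x => {Sum.inr x}) := by
        ext s
        simp [eq_comm]
      rw [this, Finset.card_image_of_injective _ (fun x x' h => by
        have := Finset.singleton_injective h
        injection this)]
      simp
    · -- intervals
      have : Finset.univ.filter (fun s : Finset (CatV k y) => ∃ p ∈ pairs k, GoodAt p s) =
          (pairs k).biUnion (fun p => Finset.univ.filter (fun s => GoodAt p s)) := by
        ext s
        simp only [Finset.mem_filter, Finset.mem_univ, true_and, Finset.mem_biUnion]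
      rw [this, Finset.card_biUnion]
      · apply Finset.sum_congr rfl
        intro p hp
        obtain ⟨a, b⟩ := p
        exact card_goodAt a b
      · intro p hp q hq hpq
        rw [Function.onFun, Finset.disjoint_left]
        intro s hs1 hs2
        simp only [Finset.mem_filter] at hs1 hs2
        exact hpq (goodAt_unique hp hq hs1.2 hs2.2)
  · rw [Finset.disjoint_left]
    rintro s hs1 hs2
    simp only [Finset.mem_filter, Finset.mem_univ, true_and] at hs1 hs2
    obtain ⟨x, rfl⟩ := hs1
    obtain ⟨⟨a, b⟩, hp, hsp, -⟩ := hs2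
    rw [mem_pairs] at hp
    have := (hsp ⟨a, by omega⟩).2 (by simp; omega)
    simp at this


def Lb (z : Fin k → ℕ) (I : ℕ) : ℕ := ∑ a ∈ Finset.range (I+2), 2^(Ex z (a, I))
def Rb (z : Fin k → ℕ) (I : ℕ) : ℕ := ∑ b ∈ Finset.Icc (I+2) (k+1), 2^(Ex z (I+3, b))

lemma ex_congr {w w' : Fin k → ℕ} {p : ℕ × ℕ}
    (h : ∀ m : Fin k, p.1 ≤ (m:ℕ)+1 → (m:ℕ)+1 ≤ p.2 → w m = w' m) : Ex w p = Ex w' p := by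
  refine Finset.sum_congr rfl ?_
  intro m hm
  simp only [Finset.mem_filter, Finset.mem_univ, true_and] at hm
  exact h m hm.1 hm.2

lemma ex_split_top (w : Fin k → ℕ) (a c : ℕ) (hc : c < k) (hac : a ≤ c+1) :
    Ex w (a, c+1) = Ex w (a, c) + w ⟨c, hc⟩ := by
  unfold Ex
  have hins : Finset.univ.filter (fun m : Fin k => a ≤ (m:ℕ)+1 ∧ (m:ℕ)+1 ≤ c+1) =
      insert ⟨c, hc⟩ (Finset.univ.filter (fun m : Fin k => a ≤ (m:ℕ)+1 ∧ (m:ℕ)+1 ≤ c)) := by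
    ext m
    simp only [Finset.mem_filter, Finset.mem_univ, true_and, Finset.mem_insert]
    constructor
    · rintro ⟨h1, h2⟩
      by_cases hm : (m:ℕ) = c
      · exact Or.inl (Fin.ext hm)
      · exact Or.inr ⟨h1, by omega⟩
    · rintro (rfl | ⟨h1, h2⟩)
      · simp; omega
      · exact ⟨h1, by omega⟩
  rw [hins, Finset.sum_insert (by simp)]
  ring

lemma ex_split_bot (w : Fin k → ℕ) (c b : ℕ) (hc : c < k) (hcb : c+1 ≤ b) :
    Ex w (c+1, b) = w ⟨c, hc⟩ + Ex w (c+2, b) := by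
  unfold Ex
  have hins : Finset.univ.filter (fun m : Fin k => c+1 ≤ (m:ℕ)+1 ∧ (m:ℕ)+1 ≤ b) =
      insert ⟨c, hc⟩ (Finset.univ.filter (fun m : Fin k => c+2 ≤ (m:ℕ)+1 ∧ (m:ℕ)+1 ≤ b)) := by
    ext m
    simp only [Finset.mem_filter, Finset.mem_univ, true_and, Finset.mem_insert]
    constructor
    · rintro ⟨h1, h2⟩
      by_cases hm : (m:ℕ) = c
      · exact Or.inl (Fin.ext hm)
      · exact Or.inr ⟨by omega, h2⟩
    · rintro (rfl | ⟨h1, h2⟩)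
      · simp; omega
      · exact ⟨by omega, h2⟩
  rw [hins, Finset.sum_insert (by simp)]

section swap
variable (z : Fin k → ℕ) (i0 i1 : Fin k) (hi : (i0:ℕ)+1 = (i1:ℕ))

include hi in
lemma ex_swap_low {p : ℕ × ℕ} (hp : p.2 ≤ (i0:ℕ) ∨ (i1:ℕ)+2 ≤ p.1) :
    Ex (z ∘ (Equiv.swap i0 i1)) p = Ex z p := by
  apply ex_congr
  intro m h1 h2
  have hm0 : m ≠ i0 := by rintro rfl; omega
  have hm1 : m ≠ i1 := by rintro rfl; omega
  simp [Equiv.swap_apply_of_ne_of_ne hm0 hm1]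

include hi in
lemma ex_swap_both {p : ℕ × ℕ} (h1 : p.1 ≤ (i0:ℕ)+1) (h2 : (i1:ℕ)+1 ≤ p.2) :
    Ex (z ∘ (Equiv.swap i0 i1)) p = Ex z p := by
  unfold Ex
  refine Finset.sum_equiv (Equiv.swap i0 i1) ?_ ?_
  · intro m
    simp only [Finset.mem_filter, Finset.mem_univ, true_and]
    rcases eq_or_ne m i0 with rfl | h0
    · rw [Equiv.swap_apply_left]; omega
    rcases eq_or_ne m i1 with rfl | h1'
    · rw [Equiv.swap_apply_right]; omega
    · rw [Equiv.swap_apply_of_ne_of_ne h0 h1']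
  · intro m _
    simp

include hi in
lemma phi_decomp (w : Fin k → ℕ) :
    ∑ p ∈ pairs k, 2^(Ex w p) =
      (∑ p ∈ (pairs k).filter (fun p => ¬ p.2 = (i0:ℕ)+1 ∧ ¬ p.1 = (i0:ℕ)+2), 2^(Ex w p)) +
      (2^(w i0) * ∑ a ∈ Finset.range ((i0:ℕ)+2), 2^(Ex w (a, (i0:ℕ)))) +
      (2^(w i1) * ∑ b ∈ Finset.Icc ((i0:ℕ)+2) (k+1), 2^(Ex w ((i0:ℕ)+3, b))) := by
  have hI1 : (i0:ℕ)+1 < k := by have := i1.2; omega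
  -- split off q1 : p.2 = I+1
  rw [← Finset.sum_filter_add_sum_filter_not (pairs k) (fun p => p.2 = (i0:ℕ)+1)]
  -- split remaining by q2 : p.1 = I+2
  rw [← Finset.sum_filter_add_sum_filter_not
    ((pairs k).filter (fun p => ¬ p.2 = (i0:ℕ)+1)) (fun p => p.1 = (i0:ℕ)+2)]
  rw [Finset.filter_filter, Finset.filter_filter]
  have e1 : ∑ p ∈ (pairs k).filter (fun p => p.2 = (i0:ℕ)+1), 2^(Ex w p)
      = 2^(w i0) * ∑ a ∈ Finset.range ((i0:ℕ)+2), 2^(Ex w (a, (i0:ℕ))) := by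
    rw [Finset.mul_sum]
    refine Finset.sum_nbij' (fun p => p.1) (fun a => (a, (i0:ℕ)+1)) ?_ ?_ ?_ ?_ ?_
    · intro p hp
      simp only [Finset.mem_filter, mem_pairs] at hp
      simp only [Finset.mem_range]
      omega
    · intro a ha
      simp only [Finset.mem_range] at ha
      simp only [Finset.mem_filter, mem_pairs]
      exact ⟨⟨by omega, by omega⟩, trivial⟩
    · intro p hp
      simp only [Finset.mem_filter] at hp
      exact Prod.ext rfl hp.2.symm
    · intro a ha
      rfl
    · intro p hp
      simp only [Finset.mem_filter, mem_pairs] at hp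
      have : p = (p.1, (i0:ℕ)+1) := Prod.ext rfl hp.2
      rw [this]
      rw [ex_split_top w p.1 (i0:ℕ) (by omega) (by omega)]
      have : (⟨(i0:ℕ), by omega⟩ : Fin k) = i0 := Fin.ext rfl
      rw [this, pow_add]
      ring
  have e2 : ∑ p ∈ (pairs k).filter (fun p => ¬ p.2 = (i0:ℕ)+1 ∧ p.1 = (i0:ℕ)+2), 2^(Ex w p)
      = 2^(w i1) * ∑ b ∈ Finset.Icc ((i0:ℕ)+2) (k+1), 2^(Ex w ((i0:ℕ)+3, b)) := by
    rw [Finset.mul_sum]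
    refine Finset.sum_nbij' (fun p => p.2) (fun b => ((i0:ℕ)+2, b)) ?_ ?_ ?_ ?_ ?_
    · intro p hp
      simp only [Finset.mem_filter, mem_pairs] at hp
      simp only [Finset.mem_Icc]
      omega
    · intro b hb
      simp only [Finset.mem_Icc] at hb
      simp only [Finset.mem_filter, mem_pairs]
      exact ⟨⟨by omega, by omega⟩, by omega, trivial⟩
    · intro p hp
      simp only [Finset.mem_filter] at hp
      exact Prod.ext hp.2.2.symm rfl
    · intro b hb
      rfl
    · intro p hp
      simp only [Finset.mem_filter, mem_pairs] at hp
      have hpe : p = ((i0:ℕ)+2, p.2) := Prod.ext hp.2.2 rfl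
      rw [hpe]
      have hsb : Ex w ((i0:ℕ)+1+1, p.2) = w ⟨(i0:ℕ)+1, hI1⟩ + Ex w ((i0:ℕ)+1+2, p.2) :=
        ex_split_bot w ((i0:ℕ)+1) p.2 hI1 (by omega)
      have hfin : (⟨(i0:ℕ)+1, hI1⟩ : Fin k) = i1 := Fin.ext hi
      rw [hfin] at hsb
      have : Ex w ((i0:ℕ)+2, p.2) = w i1 + Ex w ((i0:ℕ)+3, p.2) := hsb
      rw [this, pow_add]
  rw [e1, e2]
  ring

include hi in
theorem phi_swap :
    Phi k (z ∘ (Equiv.swap i0 i1)) + 2^(z i0) * Lb z (i0:ℕ) + 2^(z i1) * Rb z (i0:ℕ)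
      = Phi k z + 2^(z i1) * Lb z (i0:ℕ) + 2^(z i0) * Rb z (i0:ℕ) := by
  have hI1 : (i0:ℕ)+1 < k := by have := i1.2; omega
  unfold Phi Lb Rb
  have hsum : ∑ i, (z ∘ (Equiv.swap i0 i1)) i = ∑ i, z i := Equiv.sum_comp _ z
  rw [phi_decomp i0 i1 hi (z ∘ (Equiv.swap i0 i1)), phi_decomp i0 i1 hi z, hsum]
  have hN : ∑ p ∈ (pairs k).filter (fun p => ¬ p.2 = (i0:ℕ)+1 ∧ ¬ p.1 = (i0:ℕ)+2),
        2^(Ex (z ∘ (Equiv.swap i0 i1)) p)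
      = ∑ p ∈ (pairs k).filter (fun p => ¬ p.2 = (i0:ℕ)+1 ∧ ¬ p.1 = (i0:ℕ)+2),
        2^(Ex z p) := by
    refine Finset.sum_congr rfl ?_
    intro p hp
    simp only [Finset.mem_filter, mem_pairs] at hp
    by_cases hc : p.2 ≤ (i0:ℕ) ∨ (i1:ℕ)+2 ≤ p.1
    · rw [ex_swap_low z i0 i1 hi hc]
    · push_neg at hc
      rw [ex_swap_both z i0 i1 hi (by omega) (by omega)]
  have hLs : ∑ a ∈ Finset.range ((i0:ℕ)+2), 2^(Ex (z ∘ (Equiv.swap i0 i1)) (a, (i0:ℕ)))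
      = ∑ a ∈ Finset.range ((i0:ℕ)+2), 2^(Ex z (a, (i0:ℕ))) := by
    refine Finset.sum_congr rfl ?_
    intro a _
    rw [ex_swap_low z i0 i1 hi (Or.inl (by simp))]
  have hRs : ∑ b ∈ Finset.Icc ((i0:ℕ)+2) (k+1), 2^(Ex (z ∘ (Equiv.swap i0 i1)) ((i0:ℕ)+3, b))
      = ∑ b ∈ Finset.Icc ((i0:ℕ)+2) (k+1), 2^(Ex z ((i0:ℕ)+3, b)) := by
    refine Finset.sum_congr rfl ?_
    intro b _
    rw [ex_swap_low z i0 i1 hi (Or.inr (by simp; omega))]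
  have hA : (z ∘ (Equiv.swap i0 i1)) i0 = z i1 := by simp
  have hB : (z ∘ (Equiv.swap i0 i1)) i1 = z i0 := by simp
  rw [hN, hLs, hRs, hA, hB]
  ring
end swap

section struct
variable {z : Fin k → ℕ}

lemma ex_mono_top (z : Fin k → ℕ) (a I : ℕ) : Ex z (a, I) ≤ Ex z (a, I+1) := by
  apply Finset.sum_le_sum_of_subset
  intro m
  simp only [Finset.mem_filter, Finset.mem_univ, true_and]
  omega

lemma ex_mono_bot (z : Fin k → ℕ) (a b : ℕ) : Ex z (a+1, b) ≤ Ex z (a, b) := by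
  apply Finset.sum_le_sum_of_subset
  intro m
  simp only [Finset.mem_filter, Finset.mem_univ, true_and]
  omega

lemma ex_empty (z : Fin k → ℕ) {a b : ℕ} (h : b < a) : Ex z (a, b) = 0 := by
  unfold Ex
  apply Finset.sum_eq_zero
  intro m hm
  simp only [Finset.mem_filter, Finset.mem_univ, true_and] at hm
  omega

lemma Lb_ge (z : Fin k → ℕ) (I : ℕ) : I + 2 ≤ Lb z I := by
  unfold Lb
  calc I + 2 = ∑ _a ∈ Finset.range (I+2), 1 := by simp
  _ ≤ _ := Finset.sum_le_sum fun a _ => Nat.one_le_two_pow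

lemma Lb_succ_ge (z : Fin k → ℕ) (I : ℕ) : 1 + Lb z I ≤ Lb z (I+1) := by
  unfold Lb
  have hlast : Ex z (I+2, I+1) = 0 := ex_empty z (by omega)
  have hsplit : ∑ a ∈ Finset.range (I+1+2), 2^(Ex z (a, I+1)) =
      ∑ a ∈ Finset.range (I+2), 2^(Ex z (a, I+1)) + 2^(Ex z (I+2, I+1)) :=
    Finset.sum_range_succ _ _
  rw [hsplit, hlast, pow_zero]
  have : ∑ a ∈ Finset.range (I+2), 2^(Ex z (a, I)) ≤
      ∑ a ∈ Finset.range (I+2), 2^(Ex z (a, I+1)) :=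
    Finset.sum_le_sum fun a _ => Nat.pow_le_pow_right (by norm_num) (ex_mono_top z a I)
  omega

lemma Rb_succ_ge (z : Fin k → ℕ) (I : ℕ) (h : I + 2 ≤ k + 1) : 1 + Rb z (I+1) ≤ Rb z I := by
  unfold Rb
  have hins : Finset.Icc (I+2) (k+1) = insert (I+2) (Finset.Icc (I+3) (k+1)) := by
    ext m; simp only [Finset.mem_Icc, Finset.mem_insert]; omega
  rw [hins, Finset.sum_insert (by simp)]
  have hfst : Ex z (I+3, I+2) = 0 := ex_empty z (by omega)
  rw [hfst, pow_zero]
  have : ∑ b ∈ Finset.Icc (I+1+2) (k+1), 2^(Ex z (I+1+3, b)) ≤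
      ∑ b ∈ Finset.Icc (I+3) (k+1), 2^(Ex z (I+3, b)) := by
    rw [show I+1+2 = I+3 from rfl]
    exact Finset.sum_le_sum fun b _ => Nat.pow_le_pow_right (by norm_num) (ex_mono_bot z (I+3) b)
  omega

lemma Rb_last (z : Fin k → ℕ) (hk : 2 ≤ k) : Rb z (k-2) ≤ 2 := by
  unfold Rb
  have h1 : k-2+2 = k := by omega
  have h2 : k-2+3 = k+1 := by omega
  rw [h1, h2]
  have hpair : Finset.Icc k (k+1) = {k, k+1} := by ext m; simp; omega
  rw [hpair, Finset.sum_pair (by omega)]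
  have e1 : Ex z (k+1, k) = 0 := ex_empty z (by omega)
  have e2 : Ex z (k+1, k+1) = 0 := by
    unfold Ex
    apply Finset.sum_eq_zero
    intro m hm
    simp only [Finset.mem_filter, Finset.mem_univ, true_and] at hm
    have := m.2
    omega
  rw [e1, e2]
  simp

lemma Lb_mono (z : Fin k → ℕ) (I d : ℕ) : Lb z I + d ≤ Lb z (I + d) := by
  induction d with
  | zero => simp
  | succ d ih =>
    have h1 := Lb_succ_ge z (I + d)
    rw [show I + (d+1) = I + d + 1 from rfl]
    omega

lemma Rb_mono (z : Fin k → ℕ) (I d : ℕ) (h : I + d ≤ k - 1) (hk : 1 ≤ k) :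
    Rb z (I + d) + d ≤ Rb z I := by
  induction d with
  | zero => simp
  | succ d ih =>
    have h1 := Rb_succ_ge z (I + d) (by omega)
    have h2 := ih (by omega)
    rw [show I + (d+1) = I + d + 1 from rfl] at *
    omega

lemma LR_of_key (z : Fin k → ℕ) (i0 i1 : Fin k) (hi : (i0:ℕ)+1 = (i1:ℕ))
    (hkey : Phi k (z ∘ (Equiv.swap i0 i1)) ≤ Phi k z) :
    (z i0 < z i1 → Lb z (i0:ℕ) ≤ Rb z (i0:ℕ)) ∧
    (z i1 < z i0 → Rb z (i0:ℕ) ≤ Lb z (i0:ℕ)) := by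
  have hid := phi_swap z i0 i1 hi
  have hmain : 2^(z i1) * Lb z (i0:ℕ) + 2^(z i0) * Rb z (i0:ℕ)
      ≤ 2^(z i0) * Lb z (i0:ℕ) + 2^(z i1) * Rb z (i0:ℕ) := by omega
  constructor
  · intro hlt
    have hAB : (2:ℕ)^(z i0) < 2^(z i1) := Nat.pow_lt_pow_right one_lt_two hlt
    by_contra hc
    push_neg at hc
    zify at hmain hAB hc
    nlinarith [mul_pos (show (0:ℤ) < 2^(z i1) - 2^(z i0) by linarith)
      (show (0:ℤ) < (Lb z (i0:ℕ) : ℤ) - (Rb z (i0:ℕ) : ℤ) by linarith)]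
  · intro hlt
    have hAB : (2:ℕ)^(z i1) < 2^(z i0) := Nat.pow_lt_pow_right one_lt_two hlt
    by_contra hc
    push_neg at hc
    zify at hmain hAB hc
    nlinarith [mul_pos (show (0:ℤ) < 2^(z i0) - 2^(z i1) by linarith)
      (show (0:ℤ) < (Rb z (i0:ℕ) : ℤ) - (Lb z (i0:ℕ) : ℤ) by linarith)]

end struct

theorem shape (hk : 3 ≤ k) (z : Fin k → ℕ)
    (key : ∀ i0 i1 : Fin k, (i0:ℕ)+1 = (i1:ℕ) → Phi k (z ∘ (Equiv.swap i0 i1)) ≤ Phi k z) :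
    ∃ t : Fin k, (t:ℕ) ≤ k - 2 ∧
      (∀ i j : Fin k, i ≤ j → (j:ℕ) < (t:ℕ) → z i ≤ z j) ∧
      (∀ j : Fin k, (j:ℕ) + 1 = (t:ℕ) → z j < z t) ∧
      (∀ i j : Fin k, t ≤ i → i ≤ j → z j ≤ z i) := by
  classical
  set zz : ℕ → ℕ := fun n => if h : n < k then z ⟨n, h⟩ else 0 with hzz
  have hz : ∀ (n : ℕ) (h : n < k), zz n = z ⟨n, h⟩ := fun n h => dif_pos h
  -- step 2
  have step2 : ∀ I J : ℕ, I + 1 < k → J + 1 < k → I ≤ J →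
      zz (I+1) < zz I → zz J < zz (J+1) → False := by
    intro I J hIk hJk hIJ hd ha
    have hLR_I := LR_of_key z ⟨I, by omega⟩ ⟨I+1, hIk⟩ rfl (key _ _ rfl)
    have hLR_J := LR_of_key z ⟨J, by omega⟩ ⟨J+1, hJk⟩ rfl (key _ _ rfl)
    rcases eq_or_lt_of_le hIJ with rfl | hlt
    · omega
    · rw [hz I (by omega), hz (I+1) hIk] at hd
      rw [hz J (by omega), hz (J+1) hJk] at ha
      have h1 : Rb z I ≤ Lb z I := hLR_I.2 hd
      have h2 : Lb z J ≤ Rb z J := hLR_J.1 ha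
      have h3 := Lb_mono z I (J - I)
      have h4 := Rb_mono z I (J - I) (by omega) (by omega)
      rw [show I + (J - I) = J by omega] at h3 h4
      omega
  -- step 3
  have step3 : ¬ zz (k-2) < zz (k-1) := by
    intro hlt
    have h1 : (k-2) + 1 < k := by omega
    have hLR := LR_of_key z ⟨k-2, by omega⟩ ⟨(k-2)+1, h1⟩ rfl (key _ _ rfl)
    rw [hz (k-2) (by omega)] at hlt
    rw [show k-1 = (k-2)+1 by omega, hz ((k-2)+1) h1] at hlt
    have h2 := hLR.1 hlt
    have h3 := Lb_ge z (k-2)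
    have h4 := Rb_last z (by omega)
    simp only at h2 h3 h4
    omega
  -- first argmax
  obtain ⟨m0, -, hm0⟩ := Finset.exists_max_image (Finset.univ : Finset (Fin k)) z ⟨⟨0, by omega⟩, Finset.mem_univ _⟩
  set S : Finset (Fin k) := Finset.univ.filter (fun i => ∀ j : Fin k, z j ≤ z i) with hS
  have hSne : S.Nonempty := ⟨m0, by simp [hS]; intro j; exact hm0 j (Finset.mem_univ j)⟩
  set t := S.min' hSne with ht
  have htmax : ∀ j : Fin k, z j ≤ z t := by
    have := S.min'_mem hSne
    simp [hS] at this
    exact this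
  have htfirst : ∀ j : Fin k, j < t → z j < z t := by
    intro j hj
    rcases lt_or_eq_of_le (htmax j) with h | h
    · exact h
    · exfalso
      have hjS : j ∈ S := by
        simp [hS]
        intro m
        rw [h]
        exact htmax m
      have := S.min'_le j hjS
      rw [← ht] at this
      exact absurd hj (not_lt.2 this)
  -- chains
  have chain_mono : ∀ (a d : ℕ), (∀ m, a ≤ m → m + 1 ≤ a + d → zz m ≤ zz (m+1)) →
      zz a ≤ zz (a+d) := by
    intro a d
    induction d with
    | zero => intro _; simp
    | succ d ih =>
      intro hstep
      have h1 := ih (fun m h1 h2 => hstep m h1 (by omega))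
      have h2 := hstep (a+d) (by omega) (by omega)
      rw [show a + (d+1) = a + d + 1 from rfl]
      omega
  have chain_anti : ∀ (a d : ℕ), (∀ m, a ≤ m → m + 1 ≤ a + d → zz (m+1) ≤ zz m) →
      zz (a+d) ≤ zz a := by
    intro a d
    induction d with
    | zero => intro _; simp
    | succ d ih =>
      intro hstep
      have h1 := ih (fun m h1 h2 => hstep m h1 (by omega))
      have h2 := hstep (a+d) (by omega) (by omega)
      rw [show a + (d+1) = a + d + 1 from rfl]
      omega
  have ht2 : (t:ℕ) ≤ k - 2 := by
    by_contra hc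
    have htv : (t:ℕ) = k - 1 := by have := t.2; omega
    have hlt := htfirst ⟨k-2, by omega⟩ (by rw [Fin.lt_def]; simp; omega)
    apply step3
    rw [hz (k-2) (by omega), hz (k-1) (by omega)]
    have : (⟨k-1, by omega⟩ : Fin k) = t := Fin.ext (by simp [htv])
    rw [this]
    exact hlt
  -- no descent before t
  have nodesc : ∀ I, I + 1 ≤ (t:ℕ) → zz I ≤ zz (I+1) := by
    intro I hIt
    by_contra hc
    push_neg at hc
    have hIk : I + 1 < k := by have := t.2; omega
    have hanti : zz ((I+1) + ((t:ℕ) - (I+1))) ≤ zz (I+1) := by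
      apply chain_anti
      intro m h1 h2
      by_contra hca
      push_neg at hca
      exact step2 I m hIk (by have := t.2; omega) (by omega) hc hca
    rw [show (I+1) + ((t:ℕ) - (I+1)) = (t:ℕ) by omega] at hanti
    have hzt : zz (t:ℕ) = z t := by rw [hz (t:ℕ) t.2]
    have hIle : zz I ≤ zz (t:ℕ) := by
      rw [hzt, hz I (by omega)]
      exact htmax _
    omega
  -- no ascent after t
  have noasc : ∀ J, (t:ℕ) ≤ J → J + 1 < k → zz (J+1) ≤ zz J := by
    intro J htJ hJk
    by_contra hc
    push_neg at hc
    by_cases hex : ∃ I, (t:ℕ) ≤ I ∧ I < J ∧ zz (I+1) < zz I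
    · obtain ⟨I, h1, h2, h3⟩ := hex
      exact step2 I J (by omega) hJk (by omega) h3 hc
    · push_neg at hex
      have hmono : zz (t:ℕ) ≤ zz ((t:ℕ) + (J - (t:ℕ))) := by
        apply chain_mono
        intro m h1 h2
        by_cases hm : m < J
        · exact hex m h1 hm
        · omega
      rw [show (t:ℕ) + (J - (t:ℕ)) = J by omega] at hmono
      have hJ1 : zz (J+1) ≤ zz (t:ℕ) := by
        rw [hz (J+1) (by omega), hz (t:ℕ) t.2]
        exact htmax _
      omega
  refine ⟨t, ht2, ?_, ?_, ?_⟩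
  · intro i j hij hjt
    have h1 : zz (i:ℕ) ≤ zz ((i:ℕ) + ((j:ℕ) - (i:ℕ))) := by
      apply chain_mono
      intro m h1 h2
      apply nodesc
      rw [Fin.le_def] at hij
      omega
    rw [show (i:ℕ) + ((j:ℕ) - (i:ℕ)) = (j:ℕ) by rw [Fin.le_def] at hij; omega] at h1
    rw [hz (i:ℕ) i.2, hz (j:ℕ) j.2] at h1
    simpa using h1
  · intro j hj
    exact htfirst j (by rw [Fin.lt_def]; omega)
  · intro i j hti hij
    have h1 : zz ((i:ℕ) + ((j:ℕ) - (i:ℕ))) ≤ zz (i:ℕ) := by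
      apply chain_anti
      intro m h1 h2
      apply noasc m
      · rw [Fin.le_def] at hti; omega
      · rw [Fin.le_def] at hij
        have := j.2
        omega
    rw [show (i:ℕ) + ((j:ℕ) - (i:ℕ)) = (j:ℕ) by rw [Fin.le_def] at hij; omega] at h1
    rw [hz (i:ℕ) i.2, hz (j:ℕ) j.2] at h1
    simpa using h1



lemma nbr_inr (x : Σ i : Fin k, Fin (y i)) :
    (catGraph k y).neighborSet (Sum.inr x) =
      {(Sum.inl ⟨(x.1:ℕ)+1, by omega⟩ : CatV k y)} := by
  ext c
  simp only [mem_neighborSet, Set.mem_singleton_iff]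
  constructor
  · exact leaf_nbr
  · rintro rfl
    exact adj_inr_inl.2 (by simp)

lemma deg_inr (x : Σ i : Fin k, Fin (y i)) :
    Nat.card ((catGraph k y).neighborSet (Sum.inr x)) = 1 := by
  rw [nbr_inr]
  exact Nat.card_unique

lemma deg_zero (j : Fin (k+2)) (h : (j:ℕ) = 0) :
    Nat.card ((catGraph k y).neighborSet (Sum.inl j)) = 1 := by
  have : (catGraph k y).neighborSet (Sum.inl j) = {(Sum.inl ⟨1, by omega⟩ : CatV k y)} := by
    ext c
    simp only [mem_neighborSet, Set.mem_singleton_iff]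
    constructor
    · intro hadj
      cases c with
      | inl i =>
        rcases adj_inl_inl.1 hadj with h' | h'
        · exact congrArg Sum.inl (Fin.ext (by show (i:ℕ) = 1; omega))
        · omega
      | inr xx =>
        have := adj_inl_inr.1 hadj
        omega
    · rintro rfl
      exact adj_inl_inl.2 (Or.inl (by simp [h]))
  rw [this]
  exact Nat.card_unique

lemma deg_last (j : Fin (k+2)) (h : (j:ℕ) = k+1) :
    Nat.card ((catGraph k y).neighborSet (Sum.inl j)) = 1 := by
  have : (catGraph k y).neighborSet (Sum.inl j) = {(Sum.inl ⟨k, by omega⟩ : CatV k y)} := by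
    ext c
    simp only [mem_neighborSet, Set.mem_singleton_iff]
    constructor
    · intro hadj
      cases c with
      | inl i =>
        have hi := i.2
        rcases adj_inl_inl.1 hadj with h' | h'
        · omega
        · exact congrArg Sum.inl (Fin.ext (by show (i:ℕ) = k; omega))
      | inr xx =>
        have := adj_inl_inr.1 hadj
        have := xx.1.2
        omega
    · rintro rfl
      exact adj_inl_inl.2 (Or.inr (by simp [h]))
  rw [this]
  exact Nat.card_unique

lemma deg_mid (j : Fin (k+2)) (m : Fin k) (h : (j:ℕ) = (m:ℕ)+1) :
    Nat.card ((catGraph k y).neighborSet (Sum.inl j)) = y m + 2 := by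
  have hm := m.2
  have hset : (catGraph k y).neighborSet (Sum.inl j) =
      (Sum.inr '' {x : Σ i : Fin k, Fin (y i) | x.1 = m}) ∪
      ({Sum.inl ⟨(m:ℕ), by omega⟩, Sum.inl ⟨(m:ℕ)+2, by omega⟩} : Set (CatV k y)) := by
    ext c
    simp only [mem_neighborSet, Set.mem_union, Set.mem_image, Set.mem_setOf_eq,
      Set.mem_insert_iff, Set.mem_singleton_iff]
    constructor
    · intro hadj
      cases c with
      | inl i =>
        rcases adj_inl_inl.1 hadj with h' | h'
        · exact Or.inr (Or.inr (congrArg Sum.inl (Fin.ext (by show (i:ℕ) = (m:ℕ)+2; omega))))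
        · exact Or.inr (Or.inl (congrArg Sum.inl (Fin.ext (by show (i:ℕ) = (m:ℕ); omega))))
      | inr x =>
        have hx := adj_inl_inr.1 hadj
        refine Or.inl ⟨x, Fin.ext (by omega), rfl⟩
    · rintro (⟨x, hx, rfl⟩ | rfl | rfl)
      · exact adj_inl_inr.2 (by rw [hx]; omega)
      · exact adj_inl_inl.2 (Or.inr (by show (m:ℕ)+1 = (j:ℕ); omega))
      · exact adj_inl_inl.2 (Or.inl (by show (j:ℕ)+1 = (m:ℕ)+2; omega))
  rw [hset, Nat.card_coe_set_eq, Set.ncard_union_eq ?disj (by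
      apply Set.Finite.image
      exact Set.toFinite _) (Set.toFinite _)]
  case disj =>
    rw [Set.disjoint_left]
    rintro c ⟨x, -, rfl⟩ hc
    rcases hc with hc | hc <;> simp at hc
  have h1 : {x : Σ i : Fin k, Fin (y i) | x.1 = m} = Set.range (Sigma.mk m) := by
    ext x
    simp only [Set.mem_setOf_eq, Set.mem_range]
    constructor
    · intro hx
      obtain ⟨x1, x2⟩ := x
      cases hx
      exact ⟨x2, rfl⟩
    · rintro ⟨t, rfl⟩; rfl
  rw [Set.ncard_image_of_injective _ Sum.inr_injective, h1,
    ← Nat.card_coe_set_eq, Nat.card_range_of_injective sigma_mk_injective,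
    Set.ncard_pair (by
      intro hcon
      have := congrArg (fun q => match q with | Sum.inl i => (i:ℕ) | Sum.inr _ => 0) hcon
      simp at this)]
  simp


def eSp (k : ℕ) : Fin 2 ⊕ Fin k → Fin (k+2) := fun c =>
  match c with
  | Sum.inl t => if (t:ℕ) = 0 then ⟨0, by omega⟩ else ⟨k+1, by omega⟩
  | Sum.inr i => ⟨(i:ℕ)+1, by omega⟩

lemma eSp_bij : Function.Bijective (eSp k) := by
  constructor
  · rintro (t1 | i1) (t2 | i2) he <;> simp only [eSp] at he
    · have hb1 := t1.2
      have hb2 := t2.2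
      have h1 : (t1:ℕ) = 0 ∨ (t1:ℕ) = 1 := by omega
      have h2 : (t2:ℕ) = 0 ∨ (t2:ℕ) = 1 := by omega
      have hv := congrArg Fin.val he
      rcases h1 with h1 | h1 <;> rcases h2 with h2 | h2 <;>
        simp [h1, h2] at hv <;> first
          | (congr 1; exact Fin.ext (by omega))
          | omega
    · exfalso
      have hv := congrArg Fin.val he
      have hb := i2.2
      split at hv <;> simp at hv <;> omega
    · exfalso
      have hv := congrArg Fin.val he
      have hb := i1.2
      split at hv <;> simp at hv <;> omega
    · have hv := congrArg Fin.val he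
      simp at hv
      exact congrArg Sum.inr (Fin.ext hv)
  · intro j
    by_cases h0 : (j:ℕ) = 0
    · exact ⟨Sum.inl ⟨0, by omega⟩, Fin.ext (by simp [eSp]; omega)⟩
    by_cases hl : (j:ℕ) = k+1
    · exact ⟨Sum.inl ⟨1, by omega⟩, Fin.ext (by simp [eSp]; omega)⟩
    · refine ⟨Sum.inr ⟨(j:ℕ)-1, by have := j.2; omega⟩, Fin.ext (by simp [eSp]; have := j.2; omega)⟩

lemma univ_val_map_equiv {α β γ : Type*} [Fintype α] [Fintype β] (e : α ≃ β) (f : β → γ) :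
    (Finset.univ : Finset β).val.map f = (Finset.univ : Finset α).val.map (f ∘ e) := by
  rw [(Finset.map_univ_equiv e).symm, Finset.map_val, Multiset.map_map]
  rfl

lemma card_catV : Fintype.card (CatV k y) = (k+2) + ∑ i, y i := by
  rw [Fintype.card_sum, Fintype.card_sigma]
  simp

lemma degreeMS_cat : degreeMS (catGraph k y) =
    Finset.univ.val.map (fun i : Fin k => y i + 2) + Multiset.replicate ((∑ i, y i) + 2) 1 := by
  classical
  unfold degreeMS
  have hsplit : (Finset.univ : Finset (CatV k y)).val =
      ((Finset.univ : Finset (Fin (k+2))).val.map Sum.inl) +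
      ((Finset.univ : Finset (Σ i : Fin k, Fin (y i))).val.map Sum.inr) := by
    rw [← Finset.univ_disjSum_univ]
    rfl
  rw [hsplit, Multiset.map_add, Multiset.map_map, Multiset.map_map]
  have hinr : (Finset.univ : Finset (Σ i : Fin k, Fin (y i))).val.map
      ((fun v => Nat.card ((catGraph k y).neighborSet v)) ∘ Sum.inr) =
      Multiset.replicate (∑ i, y i) 1 := by
    have hc : ∀ x ∈ (Finset.univ : Finset (Σ i : Fin k, Fin (y i))).val,
        ((fun v => Nat.card ((catGraph k y).neighborSet v)) ∘ Sum.inr) x = 1 :=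
      fun x _ => deg_inr x
    rw [Multiset.map_congr rfl hc, Multiset.map_const']
    congr 1
    have hcard : Multiset.card (Finset.univ : Finset (Σ i : Fin k, Fin (y i))).val
        = Fintype.card (Σ i : Fin k, Fin (y i)) := rfl
    rw [hcard, Fintype.card_sigma]
    simp
  have hinl : Multiset.map ((fun v => Nat.card ((catGraph k y).neighborSet v)) ∘ Sum.inl)
      (Finset.univ : Finset (Fin (k+2))).val =
      Multiset.map (fun i : Fin k => y i + 2) (Finset.univ : Finset (Fin k)).val
        + ((1:ℕ) ::ₘ 1 ::ₘ 0) := by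
    rw [univ_val_map_equiv (Equiv.ofBijective (eSp k) eSp_bij)
      ((fun v => Nat.card ((catGraph k y).neighborSet v)) ∘ Sum.inl)]
    have hsp2 : (Finset.univ : Finset (Fin 2 ⊕ Fin k)).val =
        ((Finset.univ : Finset (Fin 2)).val.map Sum.inl) +
        ((Finset.univ : Finset (Fin k)).val.map Sum.inr) := by
      rw [← Finset.univ_disjSum_univ]
      rfl
    rw [hsp2, Multiset.map_add, Multiset.map_map, Multiset.map_map]
    rw [show (Finset.univ : Finset (Fin 2)).val = 0 ::ₘ 1 ::ₘ 0 from by decide]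
    simp only [Multiset.map_cons, Multiset.map_zero]
    rw [add_comm (Multiset.map (fun i : Fin k => y i + 2) (Finset.univ : Finset (Fin k)).val) _]
    congr 1
    · have v0 : Nat.card ((catGraph k y).neighborSet (Sum.inl (eSp k (Sum.inl (0 : Fin 2))))) = 1 :=
        deg_zero _ rfl
      have v1 : Nat.card ((catGraph k y).neighborSet (Sum.inl (eSp k (Sum.inl (1 : Fin 2))))) = 1 :=
        deg_last _ rfl
      show Nat.card ((catGraph k y).neighborSet (Sum.inl (eSp k (Sum.inl (0 : Fin 2))))) ::ₘ
        Nat.card ((catGraph k y).neighborSet (Sum.inl (eSp k (Sum.inl (1 : Fin 2))))) ::ₘ 0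
        = (1:ℕ) ::ₘ 1 ::ₘ 0
      rw [v0, v1]
    · apply Multiset.map_congr rfl
      intro i _
      show Nat.card ((catGraph k y).neighborSet (Sum.inl (eSp k (Sum.inr i)))) = y i + 2
      exact deg_mid _ i rfl
  rw [hinr, hinl]
  have hrepl : Multiset.replicate ((∑ i, y i) + 2) 1
      = ((1:ℕ) ::ₘ 1 ::ₘ 0) + Multiset.replicate (∑ i, y i) 1 := by
    rw [Multiset.replicate_succ, Multiset.replicate_succ]
    rfl
  rw [hrepl, add_assoc]


section iso
variable {V : Type*} {W : Type*} [Fintype V] [Fintype W]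
  {G : SimpleGraph V} {H : SimpleGraph W}

/-- An isomorphism restricts to induced subgraphs. -/
def induceIso (f : G ≃g H) (s : Finset V) :
    (G.induce (↑s : Set V)) ≃g (H.induce (↑(s.map f.toEquiv.toEmbedding) : Set W)) where
  toFun u := ⟨f u.1, by
    simp only [Finset.coe_map, Set.mem_image, Equiv.coe_toEmbedding]
    exact ⟨u.1, u.2, rfl⟩⟩
  invFun w := ⟨f.symm w.1, by
    have hw := w.2
    simp only [Finset.coe_map, Set.mem_image, Equiv.coe_toEmbedding] at hw
    obtain ⟨a, ha, hae⟩ := hw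
    have : f.symm w.1 = a := by rw [← hae]; simp
    rw [this]
    exact ha⟩
  left_inv u := Subtype.ext (by simp)
  right_inv w := Subtype.ext (by simp)
  map_rel_iff' := by
    intro a b
    exact f.map_rel_iff

lemma numSubtrees_iso (f : G ≃g H) : numSubtrees G = numSubtrees H := by
  unfold numSubtrees
  apply Nat.card_congr
  refine Equiv.subtypeEquiv f.toEquiv.finsetCongr ?_
  intro s
  rw [Equiv.finsetCongr_apply]
  refine and_congr ?_ ?_
  · exact Finset.map_nonempty.symm
  · exact (induceIso f s).connected_iff

lemma degreeMS_iso (f : G ≃g H) : degreeMS G = degreeMS H := by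
  unfold degreeMS
  rw [univ_val_map_equiv f.toEquiv (fun v => Nat.card (H.neighborSet v))]
  apply Multiset.map_congr rfl
  intro v _
  exact Nat.card_congr (f.mapNeighborSet v)

lemma isCat_iso (f : G ≃g H) (hG : IsCaterpillar G) : IsCaterpillar H := by
  obtain ⟨⟨hconn, hacyc⟩, u, v, p, hp, hcov⟩ := hG
  refine ⟨⟨f.connected_iff.1 hconn, ?_⟩, f u, f v, p.map f.toHom, ?_, ?_⟩
  · intro w c hc
    have hinj : Function.Injective (f.symm.toHom : W → V) := f.symm.toEquiv.injective
    exact hacyc (c.map f.symm.toHom) ((Walk.map_isCycle_iff_of_injective hinj).2 hc)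
  · exact (Walk.map_isPath_iff_of_injective (f.toEquiv.injective : Function.Injective (f.toHom : V → W))).2 hp
  · intro w hw
    have hsymm : f.symm w ∉ p.support := by
      intro hmem
      apply hw
      rw [Walk.support_map]
      exact List.mem_map.2 ⟨_, hmem, by simp⟩
    obtain ⟨x, hx, hadj⟩ := hcov _ hsymm
    refine ⟨f x, ?_, ?_⟩
    · rw [Walk.support_map]
      exact List.mem_map.2 ⟨x, hx, rfl⟩
    · have h2 : H.Adj (f (f.symm w)) (f x) := f.map_rel_iff.2 hadj
      simpa using h2
end iso
end Cat

/-- Theorem 3.6: if `C(z₁,…,z_k)` (here `z : Fin k → ℕ` 0-based)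
maximizes the number of subtrees over all caterpillars with degree sequence `π`,
then there is `t` (here `t : Fin k` is the 0-based position of the paper's `t`,
so `1 ≤ t ≤ k-1` becomes `(t : ℕ) ≤ k - 2`) with
`z₁ ≤ z₂ ≤ ⋯ ≤ z_{t-1} < z_t` and `z_t ≥ z_{t+1} ≥ ⋯ ≥ z_k`. -/
theorem max_caterpillar_shape (k : ℕ) (hk : 3 ≤ k) (n : ℕ)
    (d : Fin k → ℕ) (hmono : ∀ i j : Fin k, i ≤ j → d j ≤ d i) (hd2 : ∀ i, 2 ≤ d i)
    (z : Fin k → ℕ) (hz : IsPermOf k z (fun i => d i - 2))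
    (hn : n = Fintype.card (CatV k z))
    (hmax : ∀ G : SimpleGraph (Fin n), IsCaterpillar G → degreeMS G = degSeq k d n →
      numSubtrees G ≤ numSubtrees (catGraph k z)) :
    ∃ t : Fin k, (t : ℕ) ≤ k - 2 ∧
      (∀ i j : Fin k, i ≤ j → (j : ℕ) < (t : ℕ) → z i ≤ z j) ∧
      (∀ j : Fin k, (j : ℕ) + 1 = (t : ℕ) → z j < z t) ∧
      (∀ i j : Fin k, t ≤ i → i ≤ j → z j ≤ z i) := by
  classical
  obtain ⟨σ, hσ⟩ := hz
  apply Cat.shape hk z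
  intro i0 i1 hi01
  set y' := z ∘ (Equiv.swap i0 i1) with hy'
  have hsum' : ∑ i, y' i = ∑ i, z i := Equiv.sum_comp _ z
  have hcard : Fintype.card (CatV k y') = n := by
    rw [Cat.card_catV, hn, Cat.card_catV, hsum']
  have e : CatV k y' ≃ Fin n := Fintype.equivFinOfCardEq hcard
  set G : SimpleGraph (Fin n) := SimpleGraph.map e.toEmbedding (catGraph k y') with hGdef
  have f : catGraph k y' ≃g G := SimpleGraph.Iso.map e _
  have h1 : IsCaterpillar G := Cat.isCat_iso f Cat.isCat
  have h2 : degreeMS G = degSeq k d n := by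
    rw [← Cat.degreeMS_iso f, Cat.degreeMS_cat]
    unfold degSeq
    congr 1
    · set τ : Equiv.Perm (Fin k) := (Equiv.swap i0 i1).trans σ with hτ
      have hpt : ∀ i ∈ (Finset.univ : Finset (Fin k)).val, y' i + 2 = (d ∘ τ) i := by
        intro i _
        simp only [hy', hτ, Function.comp_apply, Equiv.trans_apply]
        rw [hσ (Equiv.swap i0 i1 i)]
        exact Nat.sub_add_cancel (hd2 _)
      rw [Multiset.map_congr rfl hpt, ← Cat.univ_val_map_equiv τ d]
    · congr 1
      rw [hn, Cat.card_catV, hsum']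
      omega
  have h3 := hmax G h1 h2
  rw [← Cat.numSubtrees_iso f, Cat.numSubtrees_eq, Cat.numSubtrees_eq] at h3
  exact h3
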